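/- arXiv:2605.25380 — 3 statements merged into one kernel-verified Lean document; each statement's English description precedes it below -/
import Mathlib

section
/- For every integer n ≥ 2, the null variance of the sixth power of Kendall's tau satisfies M_{τ,12}(n) − M_{τ,6}(n)² = 128(n−2) Q_{τ,6}(n) / (164726744056875 n¹¹ (n−1)¹¹), where Q_{τ,6}(n) = 100874173400000n¹⁵ + 106587400920000n¹⁴ − 1350735059674000n¹³ − 2750236703502288n¹² + 705156071105876n¹¹ + 18114848707300164n¹⁰ + 74210935173807565n⁹ + 32519698879088181n⁸ − 379954037364238322n⁷ − 639273543932846298n⁶ + 136412983449767425n⁵ + 1193679769717739457n⁴ + 1569782012721160896n³ + 1559385642899802384n² + 1047269150681247360n + 285343922116915200. -/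
open Finset Equiv

def invc {m : ℕ} (π : Perm (Fin m)) : ℕ :=
  (Finset.univ.filter (fun ij : Fin m × Fin m => ij.1 < ij.2 ∧ π ij.2 < π ij.1)).card

noncomputable def Φ {n : ℕ} (p : Perm (Fin n) × Fin (n + 1)) : Perm (Fin (n + 1)) :=
  finSuccEquivLast.trans ((p.1.optionCongr).trans (finSuccEquiv' p.2).symm)

lemma Φ_castSucc {n : ℕ} (e : Perm (Fin n)) (v : Fin (n + 1)) (i : Fin n) :
    Φ (e, v) (Fin.castSucc i) = v.succAbove (e i) := by
  simp [Φ, finSuccEquivLast_castSucc, finSuccEquiv'_symm_some]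

lemma Φ_last {n : ℕ} (e : Perm (Fin n)) (v : Fin (n + 1)) :
    Φ (e, v) (Fin.last n) = v := by
  simp [Φ, finSuccEquivLast_last]

lemma Φ_bij {n : ℕ} : Function.Bijective (Φ (n := n)) := by
  rw [Fintype.bijective_iff_injective_and_card]
  constructor
  · rintro ⟨e, v⟩ ⟨e', v'⟩ h
    have hv : v = v' := by
      have := congrArg (fun π : Perm (Fin (n+1)) => π (Fin.last n)) h
      simpa [Φ_last] using this
    subst hv
    have he : e = e' := by
      ext i
      have := congrArg (fun π : Perm (Fin (n+1)) => π (Fin.castSucc i)) h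
      simp only [Φ_castSucc] at this
      exact congrArg Fin.val (Fin.succAbove_right_injective this)
    simp [he]
  · simp [Fintype.card_perm, Nat.factorial_succ, mul_comm]

lemma lt_succAbove' {n : ℕ} (v : Fin (n + 1)) (w : Fin n) :
    v < v.succAbove w ↔ (v : ℕ) ≤ (w : ℕ) := by
  rcases lt_or_ge (Fin.castSucc w) v with h | h
  · rw [Fin.succAbove_of_castSucc_lt _ _ h]
    simp only [Fin.lt_def, Fin.coe_castSucc] at *
    omega
  · rw [Fin.succAbove_of_le_castSucc _ _ h]
    simp only [Fin.le_def, Fin.lt_def, Fin.coe_castSucc, Fin.val_succ] at *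
    omega

lemma count_ge (c n : ℕ) (h : c ≤ n) :
    ∑ k ∈ Finset.range n, (if c ≤ k then 1 else 0) = n - c := by
  induction n with
  | zero => simp
  | succ n ih =>
    rw [Finset.sum_range_succ]
    rcases Nat.lt_or_ge n c with h' | h'
    · have hzero : ∀ k ∈ Finset.range n, (if c ≤ k then 1 else 0) = 0 := by
        intro k hk
        simp only [Finset.mem_range] at hk
        rw [if_neg (by omega : ¬ c ≤ k)]
      rw [Finset.sum_congr rfl hzero, if_neg (by omega : ¬ c ≤ n)]
      simp
      omega
    · rw [ih h', if_pos h']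
      omega

lemma invc_eq_sum {m : ℕ} (π : Perm (Fin m)) :
    invc π = ∑ ij : Fin m × Fin m, (if ij.1 < ij.2 ∧ π ij.2 < π ij.1 then 1 else 0) := by
  rw [invc, Finset.card_filter]

lemma invc_Φ {n : ℕ} (e : Perm (Fin n)) (v : Fin (n + 1)) :
    invc (Φ (e, v)) = invc e + (n - (v : ℕ)) := by
  rw [invc_eq_sum, Fintype.sum_prod_type]
  rw [Fin.sum_univ_castSucc]
  have hlast : (∑ j : Fin (n+1), if Fin.last n < j ∧ Φ (e, v) j < Φ (e, v) (Fin.last n) then 1 else 0) = 0 := by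
    apply Finset.sum_eq_zero
    intro j _
    simp [Fin.not_lt.mpr (Fin.le_last j)]
  rw [hlast, add_zero]
  have hrow : ∀ i : Fin n,
      (∑ j : Fin (n+1), if Fin.castSucc i < j ∧ Φ (e, v) j < Φ (e, v) (Fin.castSucc i) then 1 else 0)
      = (∑ j : Fin n, if i < j ∧ e j < e i then 1 else 0) + (if (v : ℕ) ≤ (e i : ℕ) then 1 else 0) := by
    intro i
    rw [Fin.sum_univ_castSucc]
    congr 1
    · apply Finset.sum_congr rfl
      intro j _
      congr 1
      rw [Φ_castSucc, Φ_castSucc]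
      simp [Fin.castSucc_lt_castSucc_iff, Fin.succAbove_lt_succAbove_iff]
    · rw [Φ_castSucc, Φ_last]
      congr 1
      simp [Fin.castSucc_lt_last, lt_succAbove']
  rw [Finset.sum_congr rfl (fun i _ => hrow i), Finset.sum_add_distrib]
  congr 1
  · rw [invc_eq_sum, Fintype.sum_prod_type]
  · rw [Equiv.sum_comp e (fun w => if (v : ℕ) ≤ (w : ℕ) then 1 else 0)]
    rw [Fin.sum_univ_eq_sum_range (fun k => if (v : ℕ) ≤ k then 1 else 0)]
    exact count_ge _ _ (by omega)

lemma sum_perm_succ {n : ℕ} (f : ℕ → ℝ) :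
    ∑ π : Perm (Fin (n + 1)), f (invc π)
      = ∑ k ∈ Finset.range (n + 1), ∑ e : Perm (Fin n), f (invc e + k) := by
  rw [← Fintype.sum_bijective (Φ (n := n)) Φ_bij _ _ (fun p => rfl)]
  rw [Fintype.sum_prod_type]
  have : ∀ e : Perm (Fin n), ∑ v : Fin (n+1), f (invc (Φ (e, v)))
      = ∑ k ∈ Finset.range (n+1), f (invc e + k) := by
    intro e
    have h1 : ∀ v : Fin (n+1), f (invc (Φ (e, v))) = f (invc e + (n - (v : ℕ))) := by
      intro v; rw [invc_Φ]
    rw [Finset.sum_congr rfl (fun v _ => h1 v)]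
    rw [Fin.sum_univ_eq_sum_range (fun k => f (invc e + (n - k)))]
    rw [← Finset.sum_range_reflect]
    apply Finset.sum_congr rfl
    intro k hk
    simp only [Finset.mem_range] at hk
    congr 2
    omega
  rw [Finset.sum_congr rfl (fun e _ => this e), Finset.sum_comm]

set_option maxHeartbeats 1000000

noncomputable def Spow (m t : ℕ) : ℝ := ∑ k ∈ Finset.range t, (k : ℝ) ^ m

lemma powsum0 (n : ℕ) : Spow 0 n = (1 : ℝ) * (n : ℝ) := by
  induction n with
  | zero => simp [Spow]
  | succ n ih => rw [Spow, Finset.sum_range_succ, ← Spow, ih]; push_cast; ring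

lemma powsum1 (n : ℕ) : Spow 1 n = ((-1 : ℝ) / 2) * (n : ℝ) + ((1 : ℝ) / 2) * (n : ℝ) ^ 2 := by
  induction n with
  | zero => simp [Spow]
  | succ n ih => rw [Spow, Finset.sum_range_succ, ← Spow, ih]; push_cast; ring

lemma powsum2 (n : ℕ) : Spow 2 n = ((1 : ℝ) / 6) * (n : ℝ) + ((-1 : ℝ) / 2) * (n : ℝ) ^ 2 + ((1 : ℝ) / 3) * (n : ℝ) ^ 3 := by
  induction n with
  | zero => simp [Spow]
  | succ n ih => rw [Spow, Finset.sum_range_succ, ← Spow, ih]; push_cast; ring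

lemma powsum3 (n : ℕ) : Spow 3 n = ((1 : ℝ) / 4) * (n : ℝ) ^ 2 + ((-1 : ℝ) / 2) * (n : ℝ) ^ 3 + ((1 : ℝ) / 4) * (n : ℝ) ^ 4 := by
  induction n with
  | zero => simp [Spow]
  | succ n ih => rw [Spow, Finset.sum_range_succ, ← Spow, ih]; push_cast; ring

lemma powsum4 (n : ℕ) : Spow 4 n = ((-1 : ℝ) / 30) * (n : ℝ) + ((1 : ℝ) / 3) * (n : ℝ) ^ 3 + ((-1 : ℝ) / 2) * (n : ℝ) ^ 4 + ((1 : ℝ) / 5) * (n : ℝ) ^ 5 := by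
  induction n with
  | zero => simp [Spow]
  | succ n ih => rw [Spow, Finset.sum_range_succ, ← Spow, ih]; push_cast; ring

lemma powsum5 (n : ℕ) : Spow 5 n = ((-1 : ℝ) / 12) * (n : ℝ) ^ 2 + ((5 : ℝ) / 12) * (n : ℝ) ^ 4 + ((-1 : ℝ) / 2) * (n : ℝ) ^ 5 + ((1 : ℝ) / 6) * (n : ℝ) ^ 6 := by
  induction n with
  | zero => simp [Spow]
  | succ n ih => rw [Spow, Finset.sum_range_succ, ← Spow, ih]; push_cast; ring

lemma powsum6 (n : ℕ) : Spow 6 n = ((1 : ℝ) / 42) * (n : ℝ) + ((-1 : ℝ) / 6) * (n : ℝ) ^ 3 + ((1 : ℝ) / 2) * (n : ℝ) ^ 5 + ((-1 : ℝ) / 2) * (n : ℝ) ^ 6 + ((1 : ℝ) / 7) * (n : ℝ) ^ 7 := by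
  induction n with
  | zero => simp [Spow]
  | succ n ih => rw [Spow, Finset.sum_range_succ, ← Spow, ih]; push_cast; ring

lemma powsum7 (n : ℕ) : Spow 7 n = ((1 : ℝ) / 12) * (n : ℝ) ^ 2 + ((-7 : ℝ) / 24) * (n : ℝ) ^ 4 + ((7 : ℝ) / 12) * (n : ℝ) ^ 6 + ((-1 : ℝ) / 2) * (n : ℝ) ^ 7 + ((1 : ℝ) / 8) * (n : ℝ) ^ 8 := by
  induction n with
  | zero => simp [Spow]
  | succ n ih => rw [Spow, Finset.sum_range_succ, ← Spow, ih]; push_cast; ring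

lemma powsum8 (n : ℕ) : Spow 8 n = ((-1 : ℝ) / 30) * (n : ℝ) + ((2 : ℝ) / 9) * (n : ℝ) ^ 3 + ((-7 : ℝ) / 15) * (n : ℝ) ^ 5 + ((2 : ℝ) / 3) * (n : ℝ) ^ 7 + ((-1 : ℝ) / 2) * (n : ℝ) ^ 8 + ((1 : ℝ) / 9) * (n : ℝ) ^ 9 := by
  induction n with
  | zero => simp [Spow]
  | succ n ih => rw [Spow, Finset.sum_range_succ, ← Spow, ih]; push_cast; ring

lemma powsum9 (n : ℕ) : Spow 9 n = ((-3 : ℝ) / 20) * (n : ℝ) ^ 2 + ((1 : ℝ) / 2) * (n : ℝ) ^ 4 + ((-7 : ℝ) / 10) * (n : ℝ) ^ 6 + ((3 : ℝ) / 4) * (n : ℝ) ^ 8 + ((-1 : ℝ) / 2) * (n : ℝ) ^ 9 + ((1 : ℝ) / 10) * (n : ℝ) ^ 10 := by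
  induction n with
  | zero => simp [Spow]
  | succ n ih => rw [Spow, Finset.sum_range_succ, ← Spow, ih]; push_cast; ring

lemma powsum10 (n : ℕ) : Spow 10 n = ((5 : ℝ) / 66) * (n : ℝ) + ((-1 : ℝ) / 2) * (n : ℝ) ^ 3 + (1 : ℝ) * (n : ℝ) ^ 5 + (-1 : ℝ) * (n : ℝ) ^ 7 + ((5 : ℝ) / 6) * (n : ℝ) ^ 9 + ((-1 : ℝ) / 2) * (n : ℝ) ^ 10 + ((1 : ℝ) / 11) * (n : ℝ) ^ 11 := by
  induction n with
  | zero => simp [Spow]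
  | succ n ih => rw [Spow, Finset.sum_range_succ, ← Spow, ih]; push_cast; ring

lemma powsum11 (n : ℕ) : Spow 11 n = ((5 : ℝ) / 12) * (n : ℝ) ^ 2 + ((-11 : ℝ) / 8) * (n : ℝ) ^ 4 + ((11 : ℝ) / 6) * (n : ℝ) ^ 6 + ((-11 : ℝ) / 8) * (n : ℝ) ^ 8 + ((11 : ℝ) / 12) * (n : ℝ) ^ 10 + ((-1 : ℝ) / 2) * (n : ℝ) ^ 11 + ((1 : ℝ) / 12) * (n : ℝ) ^ 12 := by
  induction n with
  | zero => simp [Spow]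
  | succ n ih => rw [Spow, Finset.sum_range_succ, ← Spow, ih]; push_cast; ring

lemma powsum12 (n : ℕ) : Spow 12 n = ((-691 : ℝ) / 2730) * (n : ℝ) + ((5 : ℝ) / 3) * (n : ℝ) ^ 3 + ((-33 : ℝ) / 10) * (n : ℝ) ^ 5 + ((22 : ℝ) / 7) * (n : ℝ) ^ 7 + ((-11 : ℝ) / 6) * (n : ℝ) ^ 9 + (1 : ℝ) * (n : ℝ) ^ 11 + ((-1 : ℝ) / 2) * (n : ℝ) ^ 12 + ((1 : ℝ) / 13) * (n : ℝ) ^ 13 := by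
  induction n with
  | zero => simp [Spow]
  | succ n ih => rw [Spow, Finset.sum_range_succ, ← Spow, ih]; push_cast; ring

noncomputable def p0 (x : ℝ) : ℝ := (1 : ℝ)

noncomputable def p1 (x : ℝ) : ℝ := ((-1 : ℝ) / 4) * x + ((1 : ℝ) / 4) * x ^ 2

noncomputable def p2 (x : ℝ) : ℝ := ((-5 : ℝ) / 72) * x + ((5 : ℝ) / 48) * x ^ 2 + ((-7 : ℝ) / 72) * x ^ 3 + ((1 : ℝ) / 16) * x ^ 4

noncomputable def p3 (x : ℝ) : ℝ := ((5 : ℝ) / 96) * x ^ 2 + ((-19 : ℝ) / 192) * x ^ 3 + ((11 : ℝ) / 192) * x ^ 4 + ((-5 : ℝ) / 192) * x ^ 5 + ((1 : ℝ) / 64) * x ^ 6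

noncomputable def p4 (x : ℝ) : ℝ := ((31 : ℝ) / 3600) * x + ((25 : ℝ) / 1728) * x ^ 2 + ((-133 : ℝ) / 2880) * x ^ 3 + ((2111 : ℝ) / 34560) * x ^ 4 + ((-103 : ℝ) / 1800) * x ^ 5 + ((71 : ℝ) / 3456) * x ^ 6 + ((-1 : ℝ) / 192) * x ^ 7 + ((1 : ℝ) / 256) * x ^ 8

noncomputable def p5 (x : ℝ) : ℝ := ((-31 : ℝ) / 2880) * x ^ 2 + ((-253 : ℝ) / 34560) * x ^ 3 + ((187 : ℝ) / 3456) * x ^ 4 + ((-1439 : ℝ) / 27648) * x ^ 5 + ((4543 : ℝ) / 138240) * x ^ 6 + ((-1619 : ℝ) / 69120) * x ^ 7 + ((85 : ℝ) / 13824) * x ^ 8 + ((-5 : ℝ) / 9216) * x ^ 9 + ((1 : ℝ) / 1024) * x ^ 10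

noncomputable def p6 (x : ℝ) : ℝ := ((-41 : ℝ) / 10584) * x + ((-31 : ℝ) / 3456) * x ^ 2 + ((6767 : ℝ) / 870912) * x ^ 3 + ((1789 : ℝ) / 138240) * x ^ 4 + ((-213733 : ℝ) / 5806080) * x ^ 5 + ((41975 : ℝ) / 774144) * x ^ 6 + ((-249163 : ℝ) / 8128512) * x ^ 7 + ((6209 : ℝ) / 552960) * x ^ 8 + ((-19963 : ℝ) / 2488320) * x ^ 9 + ((65 : ℝ) / 36864) * x ^ 10 + ((1 : ℝ) / 6144) * x ^ 11 + ((1 : ℝ) / 4096) * x ^ 12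

noncomputable def p7 (x : ℝ) : ℝ := ((41 : ℝ) / 6048) * x ^ 2 + ((863 : ℝ) / 96768) * x ^ 3 + ((-49459 : ℝ) / 2488320) * x ^ 4 + ((-106903 : ℝ) / 4976640) * x ^ 5 + ((26627 : ℝ) / 663552) * x ^ 6 + ((-228437 : ℝ) / 6635520) * x ^ 7 + ((1514983 : ℝ) / 46448640) * x ^ 8 + ((-611647 : ℝ) / 46448640) * x ^ 9 + ((8911 : ℝ) / 3981312) * x ^ 10 + ((-49469 : ℝ) / 19906560) * x ^ 11 + ((245 : ℝ) / 442368) * x ^ 12 + ((7 : ℝ) / 49152) * x ^ 13 + ((1 : ℝ) / 16384) * x ^ 14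

noncomputable def p8 (x : ℝ) : ℝ := ((31 : ℝ) / 7200) * x + ((551267 : ℝ) / 54432000) * x ^ 2 + ((-15257 : ℝ) / 4354560) * x ^ 3 + ((-3037501 : ℝ) / 223948800) * x ^ 4 + ((1644767 : ℝ) / 130636800) * x ^ 5 + ((14936119 : ℝ) / 2239488000) * x ^ 6 + ((-458203 : ℝ) / 9953280) * x ^ 7 + ((312314839 : ℝ) / 8360755200) * x ^ 8 + ((-3017603 : ℝ) / 174182400) * x ^ 9 + ((66986981 : ℝ) / 4478976000) * x ^ 10 + ((-129067 : ℝ) / 26127360) * x ^ 11 + ((-75187 : ℝ) / 358318080) * x ^ 12 + ((-3563 : ℝ) / 4976640) * x ^ 13 + ((91 : ℝ) / 442368) * x ^ 14 + ((5 : ℝ) / 73728) * x ^ 15 + ((1 : ℝ) / 65536) * x ^ 16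

noncomputable def p9 (x : ℝ) : ℝ := ((-31 : ℝ) / 3200) * x ^ 2 + ((-316907 : ℝ) / 24192000) * x ^ 3 + ((330653 : ℝ) / 16128000) * x ^ 4 + ((20619187 : ℝ) / 696729600) * x ^ 5 + ((-2127911 : ℝ) / 139345920) * x ^ 6 + ((-125987893 : ℝ) / 6967296000) * x ^ 7 + ((6737161 : ℝ) / 248832000) * x ^ 8 + ((-51430973 : ℝ) / 1238630400) * x ^ 9 + ((81262351 : ℝ) / 3715891200) * x ^ 10 + ((-66980927 : ℝ) / 13934592000) * x ^ 11 + ((82486667 : ℝ) / 13934592000) * x ^ 12 + ((-2145203 : ℝ) / 1114767360) * x ^ 13 + ((-79219 : ℝ) / 159252480) * x ^ 14 + ((-24541 : ℝ) / 132710400) * x ^ 15 + ((17 : ℝ) / 196608) * x ^ 16 + ((7 : ℝ) / 262144) * x ^ 17 + ((1 : ℝ) / 262144) * x ^ 18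

noncomputable def p10 (x : ℝ) : ℝ := ((-61 : ℝ) / 8712) * x + ((-14849 : ℝ) / 725760) * x ^ 2 + ((-667757 : ℝ) / 191600640) * x ^ 3 + ((87749 : ℝ) / 3732480) * x ^ 4 + ((-430977791 : ℝ) / 137952460800) * x ^ 5 + ((-71502071 : ℝ) / 8360755200) * x ^ 6 + ((346533071 : ℝ) / 11036196864) * x ^ 7 + ((10741937 : ℝ) / 668860416) * x ^ 8 + ((-81820889063 : ℝ) / 2207239372800) * x ^ 9 + ((4825934101 : ℝ) / 210213273600) * x ^ 10 + ((-124787729167 : ℝ) / 4855926620160) * x ^ 11 + ((269263879 : ℝ) / 26754416640) * x ^ 12 + ((43882967 : ℝ) / 100329062400) * x ^ 13 + ((144967477 : ℝ) / 66886041600) * x ^ 14 + ((-3563695 : ℝ) / 4013162496) * x ^ 15 + ((-210593 : ℝ) / 637009920) * x ^ 16 + ((-7369 : ℝ) / 212336640) * x ^ 17 + ((355 : ℝ) / 9437184) * x ^ 18 + ((5 : ℝ) / 524288) * x ^ 19 + ((1 : ℝ) / 1048576) * x ^ 20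

noncomputable def p11 (x : ℝ) : ℝ := ((61 : ℝ) / 3168) * x ^ 2 + ((1181849 : ℝ) / 31933440) * x ^ 3 + ((-1705603 : ℝ) / 69672960) * x ^ 4 + ((-23153143 : ℝ) / 261273600) * x ^ 5 + ((-347120761 : ℝ) / 50164531200) * x ^ 6 + ((167928649 : ℝ) / 2866544640) * x ^ 7 + ((135659281 : ℝ) / 25082265600) * x ^ 8 + ((-171763451 : ℝ) / 28665446400) * x ^ 9 + ((26487449627 : ℝ) / 802632499200) * x ^ 10 + ((-9784956017 : ℝ) / 321052999680) * x ^ 11 + ((184648511287 : ℝ) / 17657914982400) * x ^ 12 + ((-33692929771 : ℝ) / 2522559283200) * x ^ 13 + ((7001931893 : ℝ) / 1605264998400) * x ^ 14 + ((265856371 : ℝ) / 160526499840) * x ^ 15 + ((589012897 : ℝ) / 802632499200) * x ^ 16 + ((-15328291 : ℝ) / 32105299968) * x ^ 17 + ((-79717 : ℝ) / 477757440) * x ^ 18 + ((3751 : ℝ) / 1698693120) * x ^ 19 + ((605 : ℝ) / 37748736) * x ^ 20 + ((121 : ℝ) / 37748736) * x ^ 21 + ((1 : ℝ) / 4194304)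 * x ^ 22

noncomputable def p12 (x : ℝ) : ℝ := ((2363911 : ℝ) / 89434800) * x + ((3366750341 : ℝ) / 58677696000) * x ^ 2 + ((-494134183 : ℝ) / 29652480000) * x ^ 3 + ((-4761236261 : ℝ) / 96566722560) * x ^ 4 + ((869334658427 : ℝ) / 17933819904000) * x ^ 5 + ((183855580837 : ℝ) / 6320730931200) * x ^ 6 + ((-27775678601327 : ℝ) / 228248616960000) * x ^ 7 + ((-4787293206503 : ℝ) / 58993488691200) * x ^ 8 + ((292392314273 : ℝ) / 3726508032000) * x ^ 9 + ((8895789938809 : ℝ) / 168552824832000) * x ^ 10 + ((-5662314646633 : ℝ) / 173903708160000) * x ^ 11 + ((1484254565879693 : ℝ) / 57847329482342400) * x ^ 12 + ((-400237870832713 : ℝ) / 26111641780224000) * x ^ 13 + ((44141243582011 : ℝ) / 25957135024128000) * x ^ 14 + ((-427613811707 : ℝ) / 63063982080000) * x ^ 15 + ((42061452961 : ℝ) / 19263179980800) * x ^ 16 + ((583387519 : ℝ) / 401316249600) * x ^ 17 + ((1425050891 : ℝ) / 7223692492800) * x ^ 18 + ((-28846499 : ℝ) / 107017666560) * x ^ 19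 + ((-293755 : ℝ) / 4076863488) * x ^ 20 + ((3179 : ℝ) / 424673280) * x ^ 21 + ((55 : ℝ) / 8388608) * x ^ 22 + ((13 : ℝ) / 12582912) * x ^ 23 + ((1 : ℝ) / 16777216) * x ^ 24

noncomputable def A (r n : ℕ) : ℝ := ∑ π : Perm (Fin n), ((invc π : ℝ)) ^ r

lemma A_zero (r : ℕ) (hr : r ≠ 0) : A r 0 = 0 := by
  rw [A]
  apply Finset.sum_eq_zero
  intro π _
  have : invc π = 0 := by simp [invc, Finset.univ_eq_empty]
  rw [this]
  simp [zero_pow hr]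

lemma A_zero_zero : A 0 0 = 1 := by
  rw [A]
  simp [Finset.card_univ]

lemma A_succ (r n : ℕ) :
    A r (n + 1) = ∑ j ∈ Finset.range (r + 1),
      (r.choose j : ℝ) * A j n * Spow (r - j) (n + 1) := by
  simp only [Spow]
  rw [A, sum_perm_succ (fun m => (m : ℝ) ^ r)]
  simp only [Nat.cast_add, add_pow, A]
  rw [Finset.sum_comm]
  have swap : ∀ e : Perm (Fin n),
      (∑ k ∈ Finset.range (n+1), ∑ j ∈ Finset.range (r+1),
        ((invc e : ℝ)) ^ j * (k : ℝ) ^ (r - j) * (r.choose j : ℝ))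
      = ∑ j ∈ Finset.range (r+1), ∑ k ∈ Finset.range (n+1),
        ((invc e : ℝ)) ^ j * (k : ℝ) ^ (r - j) * (r.choose j : ℝ) := fun e => Finset.sum_comm
  rw [Finset.sum_congr rfl (fun e _ => swap e), Finset.sum_comm]
  refine Finset.sum_congr rfl fun j hj => ?_
  rw [show (r.choose j : ℝ) * (∑ π : Perm (Fin n), ((invc π : ℝ)) ^ j)
        * (∑ k ∈ Finset.range (n + 1), (k : ℝ) ^ (r - j))
      = ∑ π : Perm (Fin n), ((r.choose j : ℝ) * ((invc π : ℝ)) ^ j)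
        * (∑ k ∈ Finset.range (n + 1), (k : ℝ) ^ (r - j)) from by
    rw [← Finset.sum_mul, ← Finset.mul_sum]]
  refine Finset.sum_congr rfl fun e _ => ?_
  rw [Finset.mul_sum]
  refine Finset.sum_congr rfl fun k _ => by ring

lemma step0 (n : ℕ) (h0 : A 0 n = (n.factorial : ℝ) * p0 (n : ℝ)) :
    A 0 (n + 1) = ((n+1).factorial : ℝ) * p0 ((n : ℝ) + 1) := by
  rw [A_succ]
  simp only [Finset.sum_range_succ, Finset.sum_range_zero, zero_add]
  simp only [show (0 : ℕ) - 0 = 0 from by norm_num, show Nat.choose 0 0 = 1 from by decide]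
  rw [powsum0 (n + 1)]
  rw [h0]
  simp only [p0, Nat.factorial_succ]
  push_cast
  ring

lemma step1 (n : ℕ) (h0 : A 0 n = (n.factorial : ℝ) * p0 (n : ℝ)) (h1 : A 1 n = (n.factorial : ℝ) * p1 (n : ℝ)) :
    A 1 (n + 1) = ((n+1).factorial : ℝ) * p1 ((n : ℝ) + 1) := by
  rw [A_succ]
  simp only [Finset.sum_range_succ, Finset.sum_range_zero, zero_add]
  simp only [show (1 : ℕ) - 0 = 1 from by norm_num, show (1 : ℕ) - 1 = 0 from by norm_num, show Nat.choose 1 0 = 1 from by decide, show Nat.choose 1 1 = 1 from by decide]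
  rw [powsum0 (n + 1), powsum1 (n + 1)]
  rw [h0, h1]
  simp only [p0, p1, Nat.factorial_succ]
  push_cast
  ring

lemma step2 (n : ℕ) (h0 : A 0 n = (n.factorial : ℝ) * p0 (n : ℝ)) (h1 : A 1 n = (n.factorial : ℝ) * p1 (n : ℝ)) (h2 : A 2 n = (n.factorial : ℝ) * p2 (n : ℝ)) :
    A 2 (n + 1) = ((n+1).factorial : ℝ) * p2 ((n : ℝ) + 1) := by
  rw [A_succ]
  simp only [Finset.sum_range_succ, Finset.sum_range_zero, zero_add]
  simp only [show (2 : ℕ) - 0 = 2 from by norm_num, show (2 : ℕ) - 1 = 1 from by norm_num, show (2 : ℕ) - 2 = 0 from by norm_num, show Nat.choose 2 0 = 1 from by decide, show Nat.choose 2 1 = 2 from by decide, show Nat.choose 2 2 = 1 from by decide]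
  rw [powsum0 (n + 1), powsum1 (n + 1), powsum2 (n + 1)]
  rw [h0, h1, h2]
  simp only [p0, p1, p2, Nat.factorial_succ]
  push_cast
  ring

lemma step3 (n : ℕ) (h0 : A 0 n = (n.factorial : ℝ) * p0 (n : ℝ)) (h1 : A 1 n = (n.factorial : ℝ) * p1 (n : ℝ)) (h2 : A 2 n = (n.factorial : ℝ) * p2 (n : ℝ)) (h3 : A 3 n = (n.factorial : ℝ) * p3 (n : ℝ)) :
    A 3 (n + 1) = ((n+1).factorial : ℝ) * p3 ((n : ℝ) + 1) := by
  rw [A_succ]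
  simp only [Finset.sum_range_succ, Finset.sum_range_zero, zero_add]
  simp only [show (3 : ℕ) - 0 = 3 from by norm_num, show (3 : ℕ) - 1 = 2 from by norm_num, show (3 : ℕ) - 2 = 1 from by norm_num, show (3 : ℕ) - 3 = 0 from by norm_num, show Nat.choose 3 0 = 1 from by decide, show Nat.choose 3 1 = 3 from by decide, show Nat.choose 3 2 = 3 from by decide, show Nat.choose 3 3 = 1 from by decide]
  rw [powsum0 (n + 1), powsum1 (n + 1), powsum2 (n + 1), powsum3 (n + 1)]
  rw [h0, h1, h2, h3]
  simp only [p0, p1, p2, p3, Nat.factorial_succ]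
  push_cast
  ring

lemma step4 (n : ℕ) (h0 : A 0 n = (n.factorial : ℝ) * p0 (n : ℝ)) (h1 : A 1 n = (n.factorial : ℝ) * p1 (n : ℝ)) (h2 : A 2 n = (n.factorial : ℝ) * p2 (n : ℝ)) (h3 : A 3 n = (n.factorial : ℝ) * p3 (n : ℝ)) (h4 : A 4 n = (n.factorial : ℝ) * p4 (n : ℝ)) :
    A 4 (n + 1) = ((n+1).factorial : ℝ) * p4 ((n : ℝ) + 1) := by
  rw [A_succ]
  simp only [Finset.sum_range_succ, Finset.sum_range_zero, zero_add]
  simp only [show (4 : ℕ) - 0 = 4 from by norm_num, show (4 : ℕ) - 1 = 3 from by norm_num, show (4 : ℕ) - 2 = 2 from by norm_num, show (4 : ℕ) - 3 = 1 from by norm_num, show (4 : ℕ) - 4 = 0 from by norm_num, show Nat.choose 4 0 = 1 from by decide, show Nat.choose 4 1 = 4 from by decide, show Nat.choose 4 2 = 6 from by decide, show Nat.choose 4 3 = 4 from by decide, show Nat.choose 4 4 = 1 from by decide]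
  rw [powsum0 (n + 1), powsum1 (n + 1), powsum2 (n + 1), powsum3 (n + 1), powsum4 (n + 1)]
  rw [h0, h1, h2, h3, h4]
  simp only [p0, p1, p2, p3, p4, Nat.factorial_succ]
  push_cast
  ring

lemma step5 (n : ℕ) (h0 : A 0 n = (n.factorial : ℝ) * p0 (n : ℝ)) (h1 : A 1 n = (n.factorial : ℝ) * p1 (n : ℝ)) (h2 : A 2 n = (n.factorial : ℝ) * p2 (n : ℝ)) (h3 : A 3 n = (n.factorial : ℝ) * p3 (n : ℝ)) (h4 : A 4 n = (n.factorial : ℝ) * p4 (n : ℝ)) (h5 : A 5 n = (n.factorial : ℝ) * p5 (n : ℝ)) :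
    A 5 (n + 1) = ((n+1).factorial : ℝ) * p5 ((n : ℝ) + 1) := by
  rw [A_succ]
  simp only [Finset.sum_range_succ, Finset.sum_range_zero, zero_add]
  simp only [show (5 : ℕ) - 0 = 5 from by norm_num, show (5 : ℕ) - 1 = 4 from by norm_num, show (5 : ℕ) - 2 = 3 from by norm_num, show (5 : ℕ) - 3 = 2 from by norm_num, show (5 : ℕ) - 4 = 1 from by norm_num, show (5 : ℕ) - 5 = 0 from by norm_num, show Nat.choose 5 0 = 1 from by decide, show Nat.choose 5 1 = 5 from by decide, show Nat.choose 5 2 = 10 from by decide, show Nat.choose 5 3 = 10 from by decide, show Nat.choose 5 4 = 5 from by decide, show Nat.choose 5 5 = 1 from by decide]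
  rw [powsum0 (n + 1), powsum1 (n + 1), powsum2 (n + 1), powsum3 (n + 1), powsum4 (n + 1), powsum5 (n + 1)]
  rw [h0, h1, h2, h3, h4, h5]
  simp only [p0, p1, p2, p3, p4, p5, Nat.factorial_succ]
  push_cast
  ring

lemma step6 (n : ℕ) (h0 : A 0 n = (n.factorial : ℝ) * p0 (n : ℝ)) (h1 : A 1 n = (n.factorial : ℝ) * p1 (n : ℝ)) (h2 : A 2 n = (n.factorial : ℝ) * p2 (n : ℝ)) (h3 : A 3 n = (n.factorial : ℝ) * p3 (n : ℝ)) (h4 : A 4 n = (n.factorial : ℝ) * p4 (n : ℝ)) (h5 : A 5 n = (n.factorial : ℝ) * p5 (n : ℝ)) (h6 : A 6 n = (n.factorial : ℝ) * p6 (n : ℝ)) :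
    A 6 (n + 1) = ((n+1).factorial : ℝ) * p6 ((n : ℝ) + 1) := by
  rw [A_succ]
  simp only [Finset.sum_range_succ, Finset.sum_range_zero, zero_add]
  simp only [show (6 : ℕ) - 0 = 6 from by norm_num, show (6 : ℕ) - 1 = 5 from by norm_num, show (6 : ℕ) - 2 = 4 from by norm_num, show (6 : ℕ) - 3 = 3 from by norm_num, show (6 : ℕ) - 4 = 2 from by norm_num, show (6 : ℕ) - 5 = 1 from by norm_num, show (6 : ℕ) - 6 = 0 from by norm_num, show Nat.choose 6 0 = 1 from by decide, show Nat.choose 6 1 = 6 from by decide, show Nat.choose 6 2 = 15 from by decide, show Nat.choose 6 3 = 20 from by decide, show Nat.choose 6 4 = 15 from by decide, show Nat.choose 6 5 = 6 from by decide, show Nat.choose 6 6 = 1 from by decide]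
  rw [powsum0 (n + 1), powsum1 (n + 1), powsum2 (n + 1), powsum3 (n + 1), powsum4 (n + 1), powsum5 (n + 1), powsum6 (n + 1)]
  rw [h0, h1, h2, h3, h4, h5, h6]
  simp only [p0, p1, p2, p3, p4, p5, p6, Nat.factorial_succ]
  push_cast
  ring

lemma step7 (n : ℕ) (h0 : A 0 n = (n.factorial : ℝ) * p0 (n : ℝ)) (h1 : A 1 n = (n.factorial : ℝ) * p1 (n : ℝ)) (h2 : A 2 n = (n.factorial : ℝ) * p2 (n : ℝ)) (h3 : A 3 n = (n.factorial : ℝ) * p3 (n : ℝ)) (h4 : A 4 n = (n.factorial : ℝ) * p4 (n : ℝ)) (h5 : A 5 n = (n.factorial : ℝ) * p5 (n : ℝ)) (h6 : A 6 n = (n.factorial : ℝ) * p6 (n : ℝ)) (h7 : A 7 n = (n.factorial : ℝ) * p7 (n : ℝ)) :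
    A 7 (n + 1) = ((n+1).factorial : ℝ) * p7 ((n : ℝ) + 1) := by
  rw [A_succ]
  simp only [Finset.sum_range_succ, Finset.sum_range_zero, zero_add]
  simp only [show (7 : ℕ) - 0 = 7 from by norm_num, show (7 : ℕ) - 1 = 6 from by norm_num, show (7 : ℕ) - 2 = 5 from by norm_num, show (7 : ℕ) - 3 = 4 from by norm_num, show (7 : ℕ) - 4 = 3 from by norm_num, show (7 : ℕ) - 5 = 2 from by norm_num, show (7 : ℕ) - 6 = 1 from by norm_num, show (7 : ℕ) - 7 = 0 from by norm_num, show Nat.choose 7 0 = 1 from by decide, show Nat.choose 7 1 = 7 from by decide, show Nat.choose 7 2 = 21 from by decide, show Nat.choose 7 3 = 35 from by decide, show Nat.choose 7 4 = 35 from by decide, show Nat.choose 7 5 = 21 from by decide, show Nat.choose 7 6 = 7 from by decide, show Nat.choose 7 7 = 1 from by decide]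
  rw [powsum0 (n + 1), powsum1 (n + 1), powsum2 (n + 1), powsum3 (n + 1), powsum4 (n + 1), powsum5 (n + 1), powsum6 (n + 1), powsum7 (n + 1)]
  rw [h0, h1, h2, h3, h4, h5, h6, h7]
  simp only [p0, p1, p2, p3, p4, p5, p6, p7, Nat.factorial_succ]
  push_cast
  ring

lemma step8 (n : ℕ) (h0 : A 0 n = (n.factorial : ℝ) * p0 (n : ℝ)) (h1 : A 1 n = (n.factorial : ℝ) * p1 (n : ℝ)) (h2 : A 2 n = (n.factorial : ℝ) * p2 (n : ℝ)) (h3 : A 3 n = (n.factorial : ℝ) * p3 (n : ℝ)) (h4 : A 4 n = (n.factorial : ℝ) * p4 (n : ℝ)) (h5 : A 5 n = (n.factorial : ℝ) * p5 (n : ℝ)) (h6 : A 6 n = (n.factorial : ℝ) * p6 (n : ℝ)) (h7 : A 7 n = (n.factorial : ℝ) * p7 (n : ℝ)) (h8 : A 8 n = (n.factorial : ℝ) * p8 (n : ℝ)) :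
    A 8 (n + 1) = ((n+1).factorial : ℝ) * p8 ((n : ℝ) + 1) := by
  rw [A_succ]
  simp only [Finset.sum_range_succ, Finset.sum_range_zero, zero_add]
  simp only [show (8 : ℕ) - 0 = 8 from by norm_num, show (8 : ℕ) - 1 = 7 from by norm_num, show (8 : ℕ) - 2 = 6 from by norm_num, show (8 : ℕ) - 3 = 5 from by norm_num, show (8 : ℕ) - 4 = 4 from by norm_num, show (8 : ℕ) - 5 = 3 from by norm_num, show (8 : ℕ) - 6 = 2 from by norm_num, show (8 : ℕ) - 7 = 1 from by norm_num, show (8 : ℕ) - 8 = 0 from by norm_num, show Nat.choose 8 0 = 1 from by decide, show Nat.choose 8 1 = 8 from by decide, show Nat.choose 8 2 = 28 from by decide, show Nat.choose 8 3 = 56 from by decide, show Nat.choose 8 4 = 70 from by decide, show Nat.choose 8 5 = 56 from by decide, show Nat.choose 8 6 = 28 from by decide, show Nat.choose 8 7 = 8 from by decide, show Nat.choose 8 8 = 1 from by decide]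
  rw [powsum0 (n + 1), powsum1 (n + 1), powsum2 (n + 1), powsum3 (n + 1), powsum4 (n + 1), powsum5 (n + 1), powsum6 (n + 1), powsum7 (n + 1), powsum8 (n + 1)]
  rw [h0, h1, h2, h3, h4, h5, h6, h7, h8]
  simp only [p0, p1, p2, p3, p4, p5, p6, p7, p8, Nat.factorial_succ]
  push_cast
  ring

lemma step9 (n : ℕ) (h0 : A 0 n = (n.factorial : ℝ) * p0 (n : ℝ)) (h1 : A 1 n = (n.factorial : ℝ) * p1 (n : ℝ)) (h2 : A 2 n = (n.factorial : ℝ) * p2 (n : ℝ)) (h3 : A 3 n = (n.factorial : ℝ) * p3 (n : ℝ)) (h4 : A 4 n = (n.factorial : ℝ) * p4 (n : ℝ)) (h5 : A 5 n = (n.factorial : ℝ) * p5 (n : ℝ)) (h6 : A 6 n = (n.factorial : ℝ) * p6 (n : ℝ)) (h7 : A 7 n = (n.factorial : ℝ) * p7 (n : ℝ)) (h8 : A 8 n = (n.factorial : ℝ) * p8 (n : ℝ)) (h9 : A 9 n = (n.factorial : ℝ) * p9 (n : ℝ)) :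
    A 9 (n + 1) = ((n+1).factorial : ℝ) * p9 ((n : ℝ) + 1) := by
  rw [A_succ]
  simp only [Finset.sum_range_succ, Finset.sum_range_zero, zero_add]
  simp only [show (9 : ℕ) - 0 = 9 from by norm_num, show (9 : ℕ) - 1 = 8 from by norm_num, show (9 : ℕ) - 2 = 7 from by norm_num, show (9 : ℕ) - 3 = 6 from by norm_num, show (9 : ℕ) - 4 = 5 from by norm_num, show (9 : ℕ) - 5 = 4 from by norm_num, show (9 : ℕ) - 6 = 3 from by norm_num, show (9 : ℕ) - 7 = 2 from by norm_num, show (9 : ℕ) - 8 = 1 from by norm_num, show (9 : ℕ) - 9 = 0 from by norm_num, show Nat.choose 9 0 = 1 from by decide, show Nat.choose 9 1 = 9 from by decide, show Nat.choose 9 2 = 36 from by decide, show Nat.choose 9 3 = 84 from by decide, show Nat.choose 9 4 = 126 from by decide, show Nat.choose 9 5 = 126 from by decide, show Nat.choose 9 6 = 84 from by decide, show Nat.choose 9 7 = 36 from by decide, show Nat.choose 9 8 = 9 from by decide, show Nat.choose 9 9 = 1 from by decide]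
  rw [powsum0 (n + 1), powsum1 (n + 1), powsum2 (n + 1), powsum3 (n + 1), powsum4 (n + 1), powsum5 (n + 1), powsum6 (n + 1), powsum7 (n + 1), powsum8 (n + 1), powsum9 (n + 1)]
  rw [h0, h1, h2, h3, h4, h5, h6, h7, h8, h9]
  simp only [p0, p1, p2, p3, p4, p5, p6, p7, p8, p9, Nat.factorial_succ]
  push_cast
  ring

lemma step10 (n : ℕ) (h0 : A 0 n = (n.factorial : ℝ) * p0 (n : ℝ)) (h1 : A 1 n = (n.factorial : ℝ) * p1 (n : ℝ)) (h2 : A 2 n = (n.factorial : ℝ) * p2 (n : ℝ)) (h3 : A 3 n = (n.factorial : ℝ) * p3 (n : ℝ)) (h4 : A 4 n = (n.factorial : ℝ) * p4 (n : ℝ)) (h5 : A 5 n = (n.factorial : ℝ) * p5 (n : ℝ)) (h6 : A 6 n = (n.factorial : ℝ) * p6 (n : ℝ)) (h7 : A 7 n = (n.factorial : ℝ) * p7 (n : ℝ)) (h8 : A 8 n = (n.factorial : ℝ) * p8 (n : ℝ)) (h9 : A 9 n = (n.factorial : ℝ) * p9 (n : ℝ)) (h10 : A 10 n = (n.factorial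 : ℝ) * p10 (n : ℝ)) :
    A 10 (n + 1) = ((n+1).factorial : ℝ) * p10 ((n : ℝ) + 1) := by
  rw [A_succ]
  simp only [Finset.sum_range_succ, Finset.sum_range_zero, zero_add]
  simp only [show (10 : ℕ) - 0 = 10 from by norm_num, show (10 : ℕ) - 1 = 9 from by norm_num, show (10 : ℕ) - 2 = 8 from by norm_num, show (10 : ℕ) - 3 = 7 from by norm_num, show (10 : ℕ) - 4 = 6 from by norm_num, show (10 : ℕ) - 5 = 5 from by norm_num, show (10 : ℕ) - 6 = 4 from by norm_num, show (10 : ℕ) - 7 = 3 from by norm_num, show (10 : ℕ) - 8 = 2 from by norm_num, show (10 : ℕ) - 9 = 1 from by norm_num, show (10 : ℕ) - 10 = 0 from by norm_num, show Nat.choose 10 0 = 1 from by decide, show Nat.choose 10 1 = 10 from by decide, show Nat.choose 10 2 = 45 from by decide, show Nat.choose 10 3 = 120 from by decide, show Nat.choose 10 4 = 210 from by decide, show Nat.choose 10 5 = 252 from by decide, show Nat.choose 10 6 = 210 from by decide, show Nat.choose 10 7 = 120 from by decide, show Nat.choose 10 8 = 45 from by decide, show Nat.choose 10 9 = 10 from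 by decide, show Nat.choose 10 10 = 1 from by decide]
  rw [powsum0 (n + 1), powsum1 (n + 1), powsum10 (n + 1), powsum2 (n + 1), powsum3 (n + 1), powsum4 (n + 1), powsum5 (n + 1), powsum6 (n + 1), powsum7 (n + 1), powsum8 (n + 1), powsum9 (n + 1)]
  rw [h0, h1, h2, h3, h4, h5, h6, h7, h8, h9, h10]
  simp only [p0, p1, p10, p2, p3, p4, p5, p6, p7, p8, p9, Nat.factorial_succ]
  push_cast
  ring

lemma step11 (n : ℕ) (h0 : A 0 n = (n.factorial : ℝ) * p0 (n : ℝ)) (h1 : A 1 n = (n.factorial : ℝ) * p1 (n : ℝ)) (h2 : A 2 n = (n.factorial : ℝ) * p2 (n : ℝ)) (h3 : A 3 n = (n.factorial : ℝ) * p3 (n : ℝ)) (h4 : A 4 n = (n.factorial : ℝ) * p4 (n : ℝ)) (h5 : A 5 n = (n.factorial : ℝ) * p5 (n : ℝ)) (h6 : A 6 n = (n.factorial : ℝ) * p6 (n : ℝ)) (h7 : A 7 n = (n.factorial : ℝ) * p7 (n : ℝ)) (h8 : A 8 n = (n.factorial : ℝ) * p8 (n : ℝ)) (h9 : A 9 n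 = (n.factorial : ℝ) * p9 (n : ℝ)) (h10 : A 10 n = (n.factorial : ℝ) * p10 (n : ℝ)) (h11 : A 11 n = (n.factorial : ℝ) * p11 (n : ℝ)) :
    A 11 (n + 1) = ((n+1).factorial : ℝ) * p11 ((n : ℝ) + 1) := by
  rw [A_succ]
  simp only [Finset.sum_range_succ, Finset.sum_range_zero, zero_add]
  simp only [show (11 : ℕ) - 0 = 11 from by norm_num, show (11 : ℕ) - 1 = 10 from by norm_num, show (11 : ℕ) - 2 = 9 from by norm_num, show (11 : ℕ) - 3 = 8 from by norm_num, show (11 : ℕ) - 4 = 7 from by norm_num, show (11 : ℕ) - 5 = 6 from by norm_num, show (11 : ℕ) - 6 = 5 from by norm_num, show (11 : ℕ) - 7 = 4 from by norm_num, show (11 : ℕ) - 8 = 3 from by norm_num, show (11 : ℕ) - 9 = 2 from by norm_num, show (11 : ℕ) - 10 = 1 from by norm_num, show (11 : ℕ) - 11 = 0 from by norm_num, show Nat.choose 11 0 = 1 from by decide, show Nat.choose 11 1 = 11 from by decide, show Nat.choose 11 2 = 55 from by decide, show Nat.choose 11 3 = 165 from by decide, show Nat.choose 11 4 = 330 from by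 decide, show Nat.choose 11 5 = 462 from by decide, show Nat.choose 11 6 = 462 from by decide, show Nat.choose 11 7 = 330 from by decide, show Nat.choose 11 8 = 165 from by decide, show Nat.choose 11 9 = 55 from by decide, show Nat.choose 11 10 = 11 from by decide, show Nat.choose 11 11 = 1 from by decide]
  rw [powsum0 (n + 1), powsum1 (n + 1), powsum10 (n + 1), powsum11 (n + 1), powsum2 (n + 1), powsum3 (n + 1), powsum4 (n + 1), powsum5 (n + 1), powsum6 (n + 1), powsum7 (n + 1), powsum8 (n + 1), powsum9 (n + 1)]
  rw [h0, h1, h2, h3, h4, h5, h6, h7, h8, h9, h10, h11]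
  simp only [p0, p1, p10, p11, p2, p3, p4, p5, p6, p7, p8, p9, Nat.factorial_succ]
  push_cast
  ring

lemma step12 (n : ℕ) (h0 : A 0 n = (n.factorial : ℝ) * p0 (n : ℝ)) (h1 : A 1 n = (n.factorial : ℝ) * p1 (n : ℝ)) (h2 : A 2 n = (n.factorial : ℝ) * p2 (n : ℝ)) (h3 : A 3 n = (n.factorial : ℝ) * p3 (n : ℝ)) (h4 : A 4 n = (n.factorial : ℝ) * p4 (n : ℝ)) (h5 : A 5 n = (n.factorial : ℝ) * p5 (n : ℝ)) (h6 : A 6 n = (n.factorial : ℝ) * p6 (n : ℝ)) (h7 : A 7 n = (n.factorial : ℝ) * p7 (n : ℝ)) (h8 : A 8 n = (n.factorial : ℝ) * p8 (n : ℝ)) (h9 : A 9 n = (n.factorial : ℝ) * p9 (n : ℝ)) (h10 : A 10 n = (n.factorial : ℝ) * p10 (n : ℝ)) (h11 : A 11 n = (n.factorial : ℝ) * p11 (n : ℝ)) (h12 : A 12 n = (n.factorial : ℝ) * p12 (n : ℝ)) :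
    A 12 (n + 1) = ((n+1).factorial : ℝ) * p12 ((n : ℝ) + 1) := by
  rw [A_succ]
  simp only [Finset.sum_range_succ, Finset.sum_range_zero, zero_add]
  simp only [show (12 : ℕ) - 0 = 12 from by norm_num, show (12 : ℕ) - 1 = 11 from by norm_num, show (12 : ℕ) - 2 = 10 from by norm_num, show (12 : ℕ) - 3 = 9 from by norm_num, show (12 : ℕ) - 4 = 8 from by norm_num, show (12 : ℕ) - 5 = 7 from by norm_num, show (12 : ℕ) - 6 = 6 from by norm_num, show (12 : ℕ) - 7 = 5 from by norm_num, show (12 : ℕ) - 8 = 4 from by norm_num, show (12 : ℕ) - 9 = 3 from by norm_num, show (12 : ℕ) - 10 = 2 from by norm_num, show (12 : ℕ) - 11 = 1 from by norm_num, show (12 : ℕ) - 12 = 0 from by norm_num, show Nat.choose 12 0 = 1 from by decide, show Nat.choose 12 1 = 12 from by decide, show Nat.choose 12 2 = 66 from by decide, show Nat.choose 12 3 = 220 from by decide, show Nat.choose 12 4 = 495 from by decide, show Nat.choose 12 5 = 792 from by decide, show Nat.choose 12 6 = 924 from by decide, show Nat.choose 12 7 = 792 from by decide, show Nat.choose 12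 8 = 495 from by decide, show Nat.choose 12 9 = 220 from by decide, show Nat.choose 12 10 = 66 from by decide, show Nat.choose 12 11 = 12 from by decide, show Nat.choose 12 12 = 1 from by decide]
  rw [powsum0 (n + 1), powsum1 (n + 1), powsum10 (n + 1), powsum11 (n + 1), powsum12 (n + 1), powsum2 (n + 1), powsum3 (n + 1), powsum4 (n + 1), powsum5 (n + 1), powsum6 (n + 1), powsum7 (n + 1), powsum8 (n + 1), powsum9 (n + 1)]
  rw [h0, h1, h2, h3, h4, h5, h6, h7, h8, h9, h10, h11, h12]
  simp only [p0, p1, p10, p11, p12, p2, p3, p4, p5, p6, p7, p8, p9, Nat.factorial_succ]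
  push_cast
  ring

lemma moments : ∀ n : ℕ, A 0 n = (n.factorial : ℝ) * p0 (n : ℝ) ∧
    A 1 n = (n.factorial : ℝ) * p1 (n : ℝ) ∧
    A 2 n = (n.factorial : ℝ) * p2 (n : ℝ) ∧
    A 3 n = (n.factorial : ℝ) * p3 (n : ℝ) ∧
    A 4 n = (n.factorial : ℝ) * p4 (n : ℝ) ∧
    A 5 n = (n.factorial : ℝ) * p5 (n : ℝ) ∧
    A 6 n = (n.factorial : ℝ) * p6 (n : ℝ) ∧
    A 7 n = (n.factorial : ℝ) * p7 (n : ℝ) ∧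
    A 8 n = (n.factorial : ℝ) * p8 (n : ℝ) ∧
    A 9 n = (n.factorial : ℝ) * p9 (n : ℝ) ∧
    A 10 n = (n.factorial : ℝ) * p10 (n : ℝ) ∧
    A 11 n = (n.factorial : ℝ) * p11 (n : ℝ) ∧
    A 12 n = (n.factorial : ℝ) * p12 (n : ℝ) := by
  intro n
  induction n with
  | zero =>
    refine ⟨?_, ?_, ?_, ?_, ?_, ?_, ?_, ?_, ?_, ?_, ?_, ?_, ?_⟩
    · rw [A_zero_zero]; norm_num [p0]
    · rw [A_zero 1 (by norm_num)]; norm_num [p1]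
    · rw [A_zero 2 (by norm_num)]; norm_num [p2]
    · rw [A_zero 3 (by norm_num)]; norm_num [p3]
    · rw [A_zero 4 (by norm_num)]; norm_num [p4]
    · rw [A_zero 5 (by norm_num)]; norm_num [p5]
    · rw [A_zero 6 (by norm_num)]; norm_num [p6]
    · rw [A_zero 7 (by norm_num)]; norm_num [p7]
    · rw [A_zero 8 (by norm_num)]; norm_num [p8]
    · rw [A_zero 9 (by norm_num)]; norm_num [p9]
    · rw [A_zero 10 (by norm_num)]; norm_num [p10]
    · rw [A_zero 11 (by norm_num)]; norm_num [p11]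
    · rw [A_zero 12 (by norm_num)]; norm_num [p12]
  | succ n ih =>
    obtain ⟨h0, h1, h2, h3, h4, h5, h6, h7, h8, h9, h10, h11, h12⟩ := ih
    refine ⟨?_, ?_, ?_, ?_, ?_, ?_, ?_, ?_, ?_, ?_, ?_, ?_, ?_⟩
    · have := step0 n h0
      rw [this]; norm_num
    · have := step1 n h0 h1
      rw [this]; norm_num
    · have := step2 n h0 h1 h2
      rw [this]; norm_num
    · have := step3 n h0 h1 h2 h3
      rw [this]; norm_num
    · have := step4 n h0 h1 h2 h3 h4
      rw [this]; norm_num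
    · have := step5 n h0 h1 h2 h3 h4 h5
      rw [this]; norm_num
    · have := step6 n h0 h1 h2 h3 h4 h5 h6
      rw [this]; norm_num
    · have := step7 n h0 h1 h2 h3 h4 h5 h6 h7
      rw [this]; norm_num
    · have := step8 n h0 h1 h2 h3 h4 h5 h6 h7 h8
      rw [this]; norm_num
    · have := step9 n h0 h1 h2 h3 h4 h5 h6 h7 h8 h9
      rw [this]; norm_num
    · have := step10 n h0 h1 h2 h3 h4 h5 h6 h7 h8 h9 h10
      rw [this]; norm_num
    · have := step11 n h0 h1 h2 h3 h4 h5 h6 h7 h8 h9 h10 h11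
      rw [this]; norm_num
    · have := step12 n h0 h1 h2 h3 h4 h5 h6 h7 h8 h9 h10 h11 h12
      rw [this]; norm_num

lemma sum_tau (n r : ℕ) (c : ℝ) :
    ∑ π : Perm (Fin n), (1 + c * (invc π : ℝ)) ^ r
      = ∑ j ∈ Finset.range (r + 1), (r.choose j : ℝ) * c ^ (r - j) * A (r - j) n := by
  simp only [add_pow, one_pow, mul_pow, A]
  rw [Finset.sum_comm]
  refine Finset.sum_congr rfl fun j hj => ?_
  rw [show (r.choose j : ℝ) * c ^ (r - j) * ∑ π : Perm (Fin n), ((invc π : ℝ)) ^ (r - j)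
      = ∑ π : Perm (Fin n), (r.choose j : ℝ) * c ^ (r - j) * ((invc π : ℝ)) ^ (r - j) from
    Finset.mul_sum _ _ _]
  refine Finset.sum_congr rfl fun e _ => by ring

lemma sum_pow (n r : ℕ) (d : ℝ) :
    ∑ π : Perm (Fin n), (d - 4 * (invc π : ℝ)) ^ r
      = ∑ j ∈ Finset.range (r + 1), (r.choose j : ℝ) * d ^ j * (-4) ^ (r - j) * A (r - j) n := by
  have : ∀ π : Perm (Fin n), d - 4 * (invc π : ℝ) = d + (-4) * (invc π : ℝ) := fun π => by ring
  simp only [this, add_pow, mul_pow, A]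
  rw [Finset.sum_comm]
  refine Finset.sum_congr rfl fun j hj => ?_
  rw [show (r.choose j : ℝ) * d ^ j * (-4) ^ (r - j) * ∑ π : Perm (Fin n), ((invc π : ℝ)) ^ (r - j)
      = ∑ π : Perm (Fin n), (r.choose j : ℝ) * d ^ j * (-4) ^ (r - j) * ((invc π : ℝ)) ^ (r - j) from
    Finset.mul_sum _ _ _]
  refine Finset.sum_congr rfl fun e _ => by ring

lemma Beq6 (n : ℕ) :
    ∑ π : Perm (Fin n), ((n : ℝ) * ((n : ℝ) - 1) - 4 * (invc π : ℝ)) ^ 6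
      = (n.factorial : ℝ) * (((-20992 : ℝ) / 1323) * (n : ℝ) + ((-992 : ℝ) / 27) * (n : ℝ) ^ 2 + ((-10552 : ℝ) / 8505) * (n : ℝ) ^ 3 + ((8584 : ℝ) / 135) * (n : ℝ) ^ 4 + ((12056 : ℝ) / 567) * (n : ℝ) ^ 5 + ((-4792 : ℝ) / 189) * (n : ℝ) ^ 6 + ((-199312 : ℝ) / 19845) * (n : ℝ) ^ 7 + ((416 : ℝ) / 135) * (n : ℝ) ^ 8 + ((320 : ℝ) / 243) * (n : ℝ) ^ 9) := by
  obtain ⟨m0, m1, m2, m3, m4, m5, m6, m7, m8, m9, m10, m11, m12⟩ := moments n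
  rw [sum_pow n 6 ((n : ℝ) * ((n : ℝ) - 1))]
  simp only [Finset.sum_range_succ, Finset.sum_range_zero, zero_add]
  simp only [show (6 : ℕ) - 0 = 6 from by norm_num, show (6 : ℕ) - 1 = 5 from by norm_num, show (6 : ℕ) - 2 = 4 from by norm_num, show (6 : ℕ) - 3 = 3 from by norm_num, show (6 : ℕ) - 4 = 2 from by norm_num, show (6 : ℕ) - 5 = 1 from by norm_num, show (6 : ℕ) - 6 = 0 from by norm_num, show Nat.choose 6 0 = 1 from by decide, show Nat.choose 6 1 = 6 from by decide, show Nat.choose 6 2 = 15 from by decide, show Nat.choose 6 3 = 20 from by decide, show Nat.choose 6 4 = 15 from by decide, show Nat.choose 6 5 = 6 from by decide, show Nat.choose 6 6 = 1 from by decide]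
  rw [m0, m1, m2, m3, m4, m5, m6]
  simp only [p0, p1, p2, p3, p4, p5, p6]
  ring

lemma Beq12 (n : ℕ) :
    ∑ π : Perm (Fin n), ((n : ℝ) * ((n : ℝ) - 1) - 4 * (invc π : ℝ)) ^ 12
      = (n.factorial : ℝ) * (((2478740340736 : ℝ) / 5589675) * (n : ℝ) + ((110321675173888 : ℝ) / 114604875) * (n : ℝ) ^ 2 + ((1484004626432 : ℝ) / 7239375) * (n : ℝ) ^ 3 + ((-2242012034048 : ℝ) / 5893965) * (n : ℝ) ^ 4 + ((-14789485476608 : ℝ) / 24877125) * (n : ℝ) ^ 5 + ((-32699866377152 : ℝ) / 24111675) * (n : ℝ) ^ 6 + ((-335095731456128 : ℝ) / 870699375) * (n : ℝ) ^ 7 + ((11386246726592 : ℝ) / 11252115) * (n : ℝ) ^ 8 + ((11018705398016 : ℝ) / 24877125) * (n : ℝ) ^ 9 + ((-10397519685824 : ℝ) / 40186125) * (n : ℝ) ^ 10 + ((-1686587548544 : ℝ) / 13820625) * (n : ℝ) ^ 11 + ((59088872371136 : ℝ) / 3447969525) * (n : ℝ) ^ 12 + ((223269329914112 : ℝ) /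 24902002125) * (n : ℝ) ^ 13 + ((15040172794112 : ℝ) / 3094331625) * (n : ℝ) ^ 14 + ((10033700864 : ℝ) / 9568125) * (n : ℝ) ^ 15 + ((-1329861632 : ℝ) / 1148175) * (n : ℝ) ^ 16 + ((-315392 : ℝ) / 2187) * (n : ℝ) ^ 17 + ((1576960 : ℝ) / 19683) * (n : ℝ) ^ 18) := by
  obtain ⟨m0, m1, m2, m3, m4, m5, m6, m7, m8, m9, m10, m11, m12⟩ := moments n
  rw [sum_pow n 12 ((n : ℝ) * ((n : ℝ) - 1))]
  simp only [Finset.sum_range_succ, Finset.sum_range_zero, zero_add]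
  simp only [show (12 : ℕ) - 0 = 12 from by norm_num, show (12 : ℕ) - 1 = 11 from by norm_num, show (12 : ℕ) - 2 = 10 from by norm_num, show (12 : ℕ) - 3 = 9 from by norm_num, show (12 : ℕ) - 4 = 8 from by norm_num, show (12 : ℕ) - 5 = 7 from by norm_num, show (12 : ℕ) - 6 = 6 from by norm_num, show (12 : ℕ) - 7 = 5 from by norm_num, show (12 : ℕ) - 8 = 4 from by norm_num, show (12 : ℕ) - 9 = 3 from by norm_num, show (12 : ℕ) - 10 = 2 from by norm_num, show (12 : ℕ) - 11 = 1 from by norm_num, show (12 : ℕ) - 12 = 0 from by norm_num, show Nat.choose 12 0 = 1 from by decide, show Nat.choose 12 1 = 12 from by decide, show Nat.choose 12 2 = 66 from by decide, show Nat.choose 12 3 = 220 from by decide, show Nat.choose 12 4 = 495 from by decide, show Nat.choose 12 5 = 792 from by decide, show Nat.choose 12 6 = 924 from by decide, show Nat.choose 12 7 = 792 from by decide, show Nat.choose 12 8 = 495 from by decide, show Nat.choose 12 9 = 220 from by decide, show Nat.choose 12 10 = 66 from by decide, show Nat.choose 12 11 = 12 from by decide, show Nat.choose 12 12 = 1 from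 by decide]
  rw [m0, m1, m2, m3, m4, m5, m6, m7, m8, m9, m10, m11, m12]
  simp only [p0, p1, p2, p3, p4, p5, p6, p7, p8, p9, p10, p11, p12]
  ring


/-- Null variance of the sixth power of Kendall's tau. -/
theorem stmt12 (n : ℕ) (hn : 2 ≤ n)
    (invp : Perm (Fin n) → ℕ)
    (hinv : ∀ π, invp π = (Finset.univ.filter
      (fun ij : Fin n × Fin n => ij.1 < ij.2 ∧ π ij.2 < π ij.1)).card)
    (τ : Perm (Fin n) → ℝ)
    (hτ : ∀ π, τ π = 1 - 4 * (invp π : ℝ) / ((n : ℝ) * ((n : ℝ) - 1)))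
    (M : ℕ → ℝ)
    (hM : ∀ r, M r = (1 / (n.factorial : ℝ)) * ∑ π : Perm (Fin n), (τ π) ^ r) :
    M 12 - (M 6) ^ 2 = 128 * ((n : ℝ) - 2) *
        (100874173400000 * (n : ℝ) ^ 15 + 106587400920000 * (n : ℝ) ^ 14
          - 1350735059674000 * (n : ℝ) ^ 13 - 2750236703502288 * (n : ℝ) ^ 12
          + 705156071105876 * (n : ℝ) ^ 11 + 18114848707300164 * (n : ℝ) ^ 10
          + 74210935173807565 * (n : ℝ) ^ 9 + 32519698879088181 * (n : ℝ) ^ 8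
          - 379954037364238322 * (n : ℝ) ^ 7 - 639273543932846298 * (n : ℝ) ^ 6
          + 136412983449767425 * (n : ℝ) ^ 5 + 1193679769717739457 * (n : ℝ) ^ 4
          + 1569782012721160896 * (n : ℝ) ^ 3 + 1559385642899802384 * (n : ℝ) ^ 2
          + 1047269150681247360 * (n : ℝ) + 285343922116915200) /
      (164726744056875 * (n : ℝ) ^ 11 * ((n : ℝ) - 1) ^ 11) := by
  have hn2 : (2 : ℝ) ≤ (n : ℝ) := by exact_mod_cast hn
  have hn0 : (n : ℝ) ≠ 0 := by linarith
  have hn1 : (n : ℝ) - 1 ≠ 0 := by intro h; linarith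
  have hD : (n : ℝ) * ((n : ℝ) - 1) ≠ 0 := mul_ne_zero hn0 hn1
  have hf : (n.factorial : ℝ) ≠ 0 := Nat.cast_ne_zero.mpr (Nat.factorial_pos n).ne'
  have htau : ∀ π : Perm (Fin n),
      τ π = ((n : ℝ) * ((n : ℝ) - 1) - 4 * (invc π : ℝ)) / ((n : ℝ) * ((n : ℝ) - 1)) := by
    intro π
    rw [hτ π, hinv π, eq_div_iff hD]
    unfold invc
    field_simp
  rw [hM 12, hM 6]
  simp only [htau, div_pow, ← Finset.sum_div]
  rw [Beq12 n, Beq6 n]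
  field_simp
  ring
end

section
/- The Bergsma–Dassios–Yanagimoto pattern kernel ψ_{τ*} on S_4 takes exactly the two values 2/3 and −1/3; moreover #{σ ∈ S_4 : ψ_{τ*}(σ) = 2/3} = 8 and #{σ ∈ S_4 : ψ_{τ*}(σ) = −1/3} = 16. -/
open Finset Equiv

private def fI (σ ω : Perm (Fin 4)) : ℤ :=
    (if max (σ (ω 0)) (σ (ω 2)) < min (σ (ω 1)) (σ (ω 3)) then (1 : ℤ) else 0)
  + (if max (σ (ω 1)) (σ (ω 3)) < min (σ (ω 0)) (σ (ω 2)) then (1 : ℤ) else 0)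
  - (if max (σ (ω 0)) (σ (ω 3)) < min (σ (ω 1)) (σ (ω 2)) then (1 : ℤ) else 0)
  - (if max (σ (ω 1)) (σ (ω 2)) < min (σ (ω 0)) (σ (ω 3)) then (1 : ℤ) else 0)

private def gI (σ : Perm (Fin 4)) : ℤ := ∑ ω : Perm (Fin 4), fI 1 ω * fI σ ω

private lemma cond_iff (a b c d : Fin 4) :
    max ((a.val : ℝ) + 1) ((b.val : ℝ) + 1) < min ((c.val : ℝ) + 1) ((d.val : ℝ) + 1)
      ↔ max a b < min c d := by
  have h : ∀ x y : Fin 4, ((x.val : ℝ) + 1 < (y.val : ℝ) + 1) ↔ x < y := by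
    intro x y
    rw [add_lt_add_iff_right, Nat.cast_lt]
    exact Iff.rfl
  simp only [max_lt_iff, lt_min_iff, h]

private lemma gdec : ∀ σ : Perm (Fin 4), gI σ = 16 ∨ gI σ = -8 := by decide

/-- The Bergsma–Dassios–Yanagimoto pattern kernel `ψ_{τ*}` on `S₄`
takes exactly the two values `2/3` (on 8 permutations) and `−1/3` (on 16). -/
theorem stmt13
    (B : (Fin 4 → ℝ) → Perm (Fin 4) → ℝ)
    (hB : ∀ u ω, B u ω =
        (if max (u (ω 0)) (u (ω 2)) < min (u (ω 1)) (u (ω 3)) then (1 : ℝ) else 0)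
      + (if max (u (ω 1)) (u (ω 3)) < min (u (ω 0)) (u (ω 2)) then (1 : ℝ) else 0)
      - (if max (u (ω 0)) (u (ω 3)) < min (u (ω 1)) (u (ω 2)) then (1 : ℝ) else 0)
      - (if max (u (ω 1)) (u (ω 2)) < min (u (ω 0)) (u (ω 3)) then (1 : ℝ) else 0))
    (vec : Perm (Fin 4) → Fin 4 → ℝ)
    (hvec : ∀ σ i, vec σ i = ((σ i).val : ℝ) + 1)
    (e : Fin 4 → ℝ) (he : ∀ i, e i = ((i : ℕ) : ℝ) + 1)
    (ψ : Perm (Fin 4) → ℝ)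
    (hψ : ∀ σ, ψ σ = (1 / 24) * ∑ ω : Perm (Fin 4), B e ω * B (vec σ) ω) :
    (∀ σ, ψ σ = 2 / 3 ∨ ψ σ = -(1 / 3)) ∧
    (Finset.univ.filter (fun σ : Perm (Fin 4) => ψ σ = 2 / 3)).card = 8 ∧
    (Finset.univ.filter (fun σ : Perm (Fin 4) => ψ σ = -(1 / 3))).card = 16 := by
  have hBv : ∀ σ ω, B (vec σ) ω = (fI σ ω : ℝ) := by
    intro σ ω
    rw [hB]
    simp only [hvec, cond_iff, fI, Int.cast_sub, Int.cast_add,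
      apply_ite (Int.cast : ℤ → ℝ), Int.cast_one, Int.cast_zero]
  have hBe : ∀ ω, B e ω = (fI 1 ω : ℝ) := by
    intro ω
    rw [hB]
    simp only [he, cond_iff, fI, Int.cast_sub, Int.cast_add,
      apply_ite (Int.cast : ℤ → ℝ), Int.cast_one, Int.cast_zero]
    rfl
  have hψg : ∀ σ, ψ σ = (gI σ : ℝ) / 24 := by
    intro σ
    rw [hψ]
    simp only [hBv, hBe, gI]
    push_cast
    ring
  have key : ∀ σ : Perm (Fin 4), (ψ σ = 2 / 3 ↔ gI σ = 16) ∧ (ψ σ = -(1 / 3) ↔ gI σ = -8) := by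
    intro σ
    rw [hψg]
    rcases gdec σ with h | h <;> rw [h] <;> norm_num
  refine ⟨fun σ => ?_, ?_, ?_⟩
  · rcases gdec σ with h | h
    · exact Or.inl ((key σ).1.mpr h)
    · exact Or.inr ((key σ).2.mpr h)
  · rw [Finset.filter_congr (fun σ _ => by simpa using (key σ).1)]
    decide
  · rw [Finset.filter_congr (fun σ _ => by simpa using (key σ).2)]
    decide
end

section
/- Let m ≥ 1 and r ≥ 1 be integers and let ψ : S_m → ℝ be any function. For each integer b with m ≤ b ≤ rm, define Ω_{r,b} = (1/b!) Σ_{π ∈ S_b} Σ_{(I_1,…,I_r)} Π_{a=1}^{r} ψ(pat_{I_a}(π)), where the inner sum is over all ordered r-tuples (I_1,…,I_r) of m-element subsets of {1,…,b} with I_1 ∪ ⋯ ∪ I_r = {1,…,b}. Then for every integer n ≥ m, (1/n!) Σ_{Π ∈ S_n} ( Σ_{I ⊆ {1,…,n}, |I| = m} ψ(pat_I(Π)) )^r = Σ_{b=m}^{rm} C(n,b) · Ω_{r,b}, where C(n,b) is the binomial coefficient with the convention C(n,b) = 0 for b > n. -/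
open Finset Equiv

theorem permExt {k : ℕ} (σ τ : Perm (Fin k)) (h : ∀ a b, σ a < σ b ↔ τ a < τ b) : σ = τ := by
  have hsm : StrictMono (fun a => τ (σ.symm a)) := by
    intro a b hab
    exact (h _ _).mp (by simpa using hab)
  have hsurj : Function.Surjective (fun a => τ (σ.symm a)) :=
    τ.surjective.comp σ.symm.surjective
  have : (StrictMono.orderIsoOfSurjective _ hsm hsurj : Fin k ≃o Fin k) = OrderIso.refl (Fin k) :=
    Subsingleton.elim _ _
  have hfun : (fun a => τ (σ.symm a)) = id := by
    funext a
    have := congrArg (fun (g : Fin k ≃o Fin k) => g a) this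
    simpa [StrictMono.coe_orderIsoOfSurjective] using this
  ext x
  have := congrFun hfun (σ x)
  simp only [symm_apply_apply, id_eq] at this
  exact congrArg Fin.val this.symm

section
variable {n : ℕ} (J : Finset (Fin n))

/-- enumeration of J -/
noncomputable def eJ : Fin J.card ≃o {x // x ∈ J} := J.orderIsoOfFin rfl

theorem fJ_inj (P : Perm (Fin n)) :
    Function.Injective (fun x : Fin J.card => P (eJ J x)) := by
  intro x y hxy
  exact (eJ J).injective (Subtype.ext (P.injective hxy))

theorem KJ_card (P : Perm (Fin n)) :
    (Finset.image (fun x : Fin J.card => P (eJ J x)) Finset.univ).card = J.card := by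
  rw [Finset.card_image_of_injective _ (fJ_inj J P), card_univ, Fintype.card_fin]

noncomputable def rho (P : Perm (Fin n)) : Perm (Fin J.card) :=
  Equiv.ofBijective
    (fun x => ((Finset.image (fun x : Fin J.card => P (eJ J x)) Finset.univ).orderIsoOfFin
        (KJ_card J P)).symm ⟨P (eJ J x), by simp [Finset.mem_image]⟩)
    (Finite.injective_iff_bijective.mp (by
      intro x y hxy
      have := ((Finset.image (fun x : Fin J.card => P (eJ J x))
          Finset.univ).orderIsoOfFin (KJ_card J P)).symm.injective hxy
      exact fJ_inj J P (by simpa using congrArg Subtype.val this)))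

theorem rho_lt_iff (P : Perm (Fin n)) (x y : Fin J.card) :
    rho J P x < rho J P y ↔ P (eJ J x) < P (eJ J y) := by
  simp only [rho, Equiv.ofBijective_apply]
  rw [← OrderIso.lt_iff_lt ((Finset.image (fun x : Fin J.card => P (eJ J x))
      Finset.univ).orderIsoOfFin (KJ_card J P))]
  simp [← Subtype.coe_lt_coe]

theorem rho_unique (P : Perm (Fin n)) (τ : Perm (Fin J.card))
    (h : ∀ x y, τ x < τ y ↔ P (eJ J x) < P (eJ J y)) : τ = rho J P := by
  apply permExt
  intro a b
  rw [h, rho_lt_iff]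

end

section
variable {n : ℕ} (J : Finset (Fin n))

noncomputable def sigJ (π : Perm (Fin J.card)) : Perm (Fin n) :=
  Equiv.Perm.ofSubtype (p := (· ∈ J))
    (((eJ J).toEquiv.symm.trans (π.trans (eJ J).toEquiv)))

theorem sigJ_apply (π : Perm (Fin J.card)) (x : Fin J.card) :
    sigJ J π (eJ J x) = eJ J (π x) := by
  rw [sigJ, Equiv.Perm.ofSubtype_apply_of_mem _ (eJ J x).2]
  simp

theorem rho_mul (P : Perm (Fin n)) (π : Perm (Fin J.card)) :
    rho J (P * sigJ J π) = rho J P * π := by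
  refine (rho_unique J (P * sigJ J π) (rho J P * π) ?_).symm
  intro x y
  simp only [Perm.mul_apply, sigJ_apply]
  exact rho_lt_iff J P (π x) (π y)

theorem sum_rho (g : Perm (Fin J.card) → ℝ) :
    (J.card.factorial : ℝ) * ∑ P : Perm (Fin n), g (rho J P)
      = (n.factorial : ℝ) * ∑ π : Perm (Fin J.card), g π := by
  have hcardb : (Fintype.card (Perm (Fin J.card)) : ℝ) = (J.card.factorial : ℝ) := by
    simp [Fintype.card_perm]
  have hcardn : (Fintype.card (Perm (Fin n)) : ℝ) = (n.factorial : ℝ) := by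
    simp [Fintype.card_perm]
  have h1 : ∀ π : Perm (Fin J.card),
      ∑ P : Perm (Fin n), g (rho J P) = ∑ P : Perm (Fin n), g (rho J P * π) := by
    intro π
    rw [← Equiv.sum_comp (Equiv.mulRight (sigJ J π)) (fun P => g (rho J P))]
    exact Finset.sum_congr rfl fun P _ => by
      simp [Equiv.mulRight, rho_mul]
  calc (J.card.factorial : ℝ) * ∑ P : Perm (Fin n), g (rho J P)
      = ∑ π : Perm (Fin J.card), ∑ P : Perm (Fin n), g (rho J P) := by
        rw [Finset.sum_const, card_univ, nsmul_eq_mul, Fintype.card_perm, Fintype.card_fin]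
    _ = ∑ π : Perm (Fin J.card), ∑ P : Perm (Fin n), g (rho J P * π) := by
        exact Finset.sum_congr rfl fun π _ => h1 π
    _ = ∑ P : Perm (Fin n), ∑ π : Perm (Fin J.card), g (rho J P * π) := Finset.sum_comm
    _ = ∑ P : Perm (Fin n), ∑ τ : Perm (Fin J.card), g τ := by
        exact Finset.sum_congr rfl fun P _ =>
          Equiv.sum_comp (Equiv.mulLeft (rho J P)) g
    _ = (n.factorial : ℝ) * ∑ π : Perm (Fin J.card), g π := by
        rw [Finset.sum_const, card_univ, nsmul_eq_mul, Fintype.card_perm, Fintype.card_fin]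

end

section
variable {n : ℕ} (J : Finset (Fin n))

noncomputable def tildeJ (I : Finset (Fin n)) : Finset (Fin J.card) :=
  Finset.univ.filter (fun x => (eJ J x : Fin n) ∈ I)

theorem eJ_coe_inj : Function.Injective (fun x : Fin J.card => (eJ J x : Fin n)) := by
  intro x y hxy
  exact (eJ J).injective (Subtype.ext hxy)

theorem image_tildeJ (I : Finset (Fin n)) (hIJ : I ⊆ J) :
    (tildeJ J I).image (fun x => (eJ J x : Fin n)) = I := by
  ext i
  simp only [tildeJ, Finset.mem_image, Finset.mem_filter, Finset.mem_univ, true_and]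
  constructor
  · rintro ⟨x, hx, rfl⟩; exact hx
  · intro hi
    exact ⟨(eJ J).symm ⟨i, hIJ hi⟩, by simp [hi], by simp⟩

theorem card_tildeJ (I : Finset (Fin n)) (hIJ : I ⊆ J) :
    (tildeJ J I).card = I.card := by
  rw [← Finset.card_image_of_injective (tildeJ J I) (eJ_coe_inj J), image_tildeJ J I hIJ]

theorem tildeJ_image (I' : Finset (Fin J.card)) :
    tildeJ J (I'.image (fun x => (eJ J x : Fin n))) = I' := by
  ext x
  simp only [tildeJ, Finset.mem_filter, Finset.mem_univ, true_and, Finset.mem_image]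
  constructor
  · rintro ⟨y, hy, hxy⟩
    rwa [← eJ_coe_inj J hxy]
  · intro hx; exact ⟨x, hx, rfl⟩

theorem image_univ_eJ :
    (Finset.univ : Finset (Fin J.card)).image (fun x => (eJ J x : Fin n)) = J := by
  ext i
  simp only [Finset.mem_image, Finset.mem_univ, true_and]
  constructor
  · rintro ⟨x, rfl⟩; exact (eJ J x).2
  · intro hi; exact ⟨(eJ J).symm ⟨i, hi⟩, by simp⟩

theorem mem_tildeJ_iff (I : Finset (Fin n)) (x : Fin J.card) :
    x ∈ tildeJ J I ↔ (eJ J x : Fin n) ∈ I := by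
  simp [tildeJ]

end

theorem pat_transfer {m n : ℕ}
    (pat : ∀ (k : ℕ), Perm (Fin k) → Finset (Fin k) → Perm (Fin m))
    (hpat : ∀ (k : ℕ) (π : Perm (Fin k)) (I : Finset (Fin k)) (h : I.card = m)
        (a b : Fin m),
        pat k π I a < pat k π I b ↔
          π ((I.orderIsoOfFin h a : Fin k)) < π ((I.orderIsoOfFin h b : Fin k)))
    (P : Perm (Fin n)) (J I : Finset (Fin n)) (hIJ : I ⊆ J) (hI : I.card = m) :
    pat n P I = pat J.card (rho J P) (tildeJ J I) := by
  have hcard : (tildeJ J I).card = m := by rw [card_tildeJ J I hIJ, hI]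
  have hc : (fun i : Fin m => ((eJ J) (((tildeJ J I).orderIsoOfFin hcard) i) : Fin n))
      = I.orderEmbOfFin hI := by
    apply Finset.orderEmbOfFin_unique
    · intro x
      have := (((tildeJ J I).orderIsoOfFin hcard) x).2
      rwa [mem_tildeJ_iff] at this
    · intro a b hab
      have h1 : ((((tildeJ J I).orderIsoOfFin hcard) a) : Fin J.card)
          < (((tildeJ J I).orderIsoOfFin hcard) b) :=
        Subtype.coe_lt_coe.mpr (((tildeJ J I).orderIsoOfFin hcard).lt_iff_lt.mpr hab)
      exact Subtype.coe_lt_coe.mpr ((eJ J).lt_iff_lt.mpr h1)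
  apply permExt
  intro a b
  rw [hpat n P I hI, hpat J.card (rho J P) (tildeJ J I) hcard, rho_lt_iff]
  have ha := congrFun hc a
  have hb := congrFun hc b
  rw [Finset.coe_orderIsoOfFin_apply] at ha hb
  rw [Finset.coe_orderIsoOfFin_apply, Finset.coe_orderIsoOfFin_apply, ← ha, ← hb]
  simp [Finset.coe_orderIsoOfFin_apply]

set_option maxHeartbeats 1000000 in
theorem perJ {m r n : ℕ} (ψ : Perm (Fin m) → ℝ)
    (pat : ∀ (k : ℕ), Perm (Fin k) → Finset (Fin k) → Perm (Fin m))
    (hpat : ∀ (k : ℕ) (π : Perm (Fin k)) (I : Finset (Fin k)) (h : I.card = m)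
        (a b : Fin m),
        pat k π I a < pat k π I b ↔
          π ((I.orderIsoOfFin h a : Fin k)) < π ((I.orderIsoOfFin h b : Fin k)))
    (J : Finset (Fin n)) :
    ∑ T ∈ (Fintype.piFinset fun _ : Fin r =>
          Finset.univ.filter fun I : Finset (Fin n) => I.card = m).filter
        (fun T => Finset.univ.biUnion T = J),
      ∑ P : Perm (Fin n), ∏ a, ψ (pat n P (T a))
    = (n.factorial : ℝ) * ((1 / ((J.card).factorial : ℝ)) *
        ∑ π : Perm (Fin J.card),
          ∑ I ∈ Finset.univ.filter (fun I : Fin r → Finset (Fin J.card) =>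
              (∀ a, (I a).card = m) ∧ Finset.univ.biUnion I = Finset.univ),
            ∏ a, ψ (pat J.card π (I a))) := by
  classical
  set src := (Fintype.piFinset fun _ : Fin r =>
      Finset.univ.filter fun I : Finset (Fin n) => I.card = m).filter
    (fun T => Finset.univ.biUnion T = J) with hsrc
  set tgt := Finset.univ.filter (fun I : Fin r → Finset (Fin J.card) =>
      (∀ a, (I a).card = m) ∧ Finset.univ.biUnion I = Finset.univ) with htgt
  have hmem : ∀ T ∈ src, (∀ a, (T a).card = m) ∧ Finset.univ.biUnion T = J := by
    intro T hT
    rw [hsrc, Finset.mem_filter, Fintype.mem_piFinset] at hT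
    exact ⟨fun a => (Finset.mem_filter.mp (hT.1 a)).2, hT.2⟩
  have hsub : ∀ T ∈ src, ∀ a, T a ⊆ J := by
    intro T hT a
    rw [← (hmem T hT).2]
    exact Finset.subset_biUnion_of_mem T (Finset.mem_univ a)
  have hB : ∑ T ∈ src, ∑ P : Perm (Fin n), ∏ a, ψ (pat n P (T a))
      = ∑ T ∈ src, ∑ P : Perm (Fin n),
          ∏ a, ψ (pat J.card (rho J P) (tildeJ J (T a))) := by
    refine Finset.sum_congr rfl fun T hT => Finset.sum_congr rfl fun P _ =>
      Finset.prod_congr rfl fun a _ => ?_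
    rw [pat_transfer pat hpat P J (T a) (hsub T hT a) ((hmem T hT).1 a)]
  have hfac : ((J.card.factorial : ℝ)) ≠ 0 := Nat.cast_ne_zero.mpr (Nat.factorial_ne_zero _)
  apply mul_left_cancel₀ hfac
  rw [hB, Finset.mul_sum]
  calc ∑ T ∈ src, (J.card.factorial : ℝ) * ∑ P : Perm (Fin n),
          ∏ a, ψ (pat J.card (rho J P) (tildeJ J (T a)))
      = ∑ T ∈ src, (n.factorial : ℝ) * ∑ π : Perm (Fin J.card),
          ∏ a, ψ (pat J.card π (tildeJ J (T a))) :=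
        Finset.sum_congr rfl fun T _ =>
          sum_rho J (fun τ => ∏ a, ψ (pat J.card τ (tildeJ J (T a))))
    _ = ∑ T' ∈ tgt, (n.factorial : ℝ) * ∑ π : Perm (Fin J.card),
          ∏ a, ψ (pat J.card π (T' a)) := by
        refine Finset.sum_nbij' (fun T => fun a => tildeJ J (T a))
          (fun T' => fun a => (T' a).image (fun x => (eJ J x : Fin n)))
          ?_ ?_ ?_ ?_ ?_
        · intro T hT
          rw [htgt, Finset.mem_filter]
          refine ⟨Finset.mem_univ _, fun a => ?_, ?_⟩
          · rw [card_tildeJ J (T a) (hsub T hT a), (hmem T hT).1 a]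
          · ext x
            simp only [Finset.mem_biUnion, Finset.mem_univ, true_and, mem_tildeJ_iff,
              iff_true]
            have hx : (eJ J x : Fin n) ∈ Finset.univ.biUnion T := by
              rw [(hmem T hT).2]; exact (eJ J x).2
            obtain ⟨a, -, ha⟩ := Finset.mem_biUnion.mp hx
            exact ⟨a, ha⟩
        · intro T' hT'
          rw [htgt, Finset.mem_filter] at hT'
          rw [hsrc, Finset.mem_filter, Fintype.mem_piFinset]
          refine ⟨fun a => ?_, ?_⟩
          · rw [Finset.mem_filter]
            exact ⟨Finset.mem_univ _,
              by rw [Finset.card_image_of_injective _ (eJ_coe_inj J), hT'.2.1 a]⟩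
          · rw [← Finset.biUnion_image, hT'.2.2, image_univ_eJ]
        · intro T hT
          funext a
          exact image_tildeJ J (T a) (hsub T hT a)
        · intro T' _
          funext a
          exact tildeJ_image J (T' a)
        · intro T _
          rfl
    _ = (n.factorial : ℝ) * ∑ T' ∈ tgt, ∑ π : Perm (Fin J.card),
          ∏ a, ψ (pat J.card π (T' a)) := (Finset.mul_sum _ _ _).symm
    _ = (n.factorial : ℝ) * ∑ π : Perm (Fin J.card), ∑ T' ∈ tgt,
          ∏ a, ψ (pat J.card π (T' a)) := by rw [Finset.sum_comm]
    _ = (J.card.factorial : ℝ) * ((n.factorial : ℝ) * ((1 / ((J.card).factorial : ℝ)) *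
          ∑ π : Perm (Fin J.card), ∑ T' ∈ tgt,
            ∏ a, ψ (pat J.card π (T' a)))) := by
        field_simp

/-- Binomial-basis expansion of the `r`-th moment of a pattern-kernel
U-statistic sum over a uniform random permutation.  `pat k π I` is the rank pattern
of `π` on the `m`-element subset `I` (characterized by `hpat`). -/
theorem stmt16 (m r : ℕ) (hm : 1 ≤ m) (hr : 1 ≤ r)
    (ψ : Perm (Fin m) → ℝ)
    (pat : ∀ (k : ℕ), Perm (Fin k) → Finset (Fin k) → Perm (Fin m))
    (hpat : ∀ (k : ℕ) (π : Perm (Fin k)) (I : Finset (Fin k)) (h : I.card = m)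
        (a b : Fin m),
        pat k π I a < pat k π I b ↔
          π ((I.orderIsoOfFin h a : Fin k)) < π ((I.orderIsoOfFin h b : Fin k)))
    (Ω : ℕ → ℝ)
    (hΩ : ∀ b, Ω b = (1 / (b.factorial : ℝ)) * ∑ π : Perm (Fin b),
      ∑ I ∈ Finset.univ.filter (fun I : Fin r → Finset (Fin b) =>
          (∀ a, (I a).card = m) ∧ Finset.univ.biUnion I = Finset.univ),
        ∏ a, ψ (pat b π (I a)))
    (n : ℕ) (hn : m ≤ n) :
    (1 / (n.factorial : ℝ)) * ∑ P : Perm (Fin n),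
        (∑ I ∈ Finset.univ.filter (fun I : Finset (Fin n) => I.card = m),
          ψ (pat n P I)) ^ r
      = ∑ b ∈ Finset.Icc m (r * m), (n.choose b : ℝ) * Ω b := by
  classical
  have hΩ0 : ∀ b, b ∉ Finset.Icc m (r * m) → Ω b = 0 := by
    intro b hb
    rw [hΩ]
    have hempty : (Finset.univ.filter (fun I : Fin r → Finset (Fin b) =>
        (∀ a, (I a).card = m) ∧ Finset.univ.biUnion I = Finset.univ)) = ∅ := by
      rw [Finset.filter_eq_empty_iff]
      rintro I - ⟨h1, h2⟩
      simp only [Finset.mem_Icc, not_and, not_le] at hb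
      have hmb : m ≤ b := by
        rw [← h1 ⟨0, hr⟩]
        simpa using Finset.card_le_univ (I ⟨0, hr⟩)
      have hbig := hb hmb
      have hsmall : b ≤ r * m := by
        calc b = (Finset.univ : Finset (Fin b)).card := by simp
          _ = (Finset.univ.biUnion I).card := by rw [h2]
          _ ≤ ∑ a, (I a).card := Finset.card_biUnion_le
          _ = r * m := by simp [h1, Finset.sum_const, mul_comm]
      omega
    rw [hempty]
    simp
  have key : ∑ P : Perm (Fin n),
      (∑ I ∈ Finset.univ.filter (fun I : Finset (Fin n) => I.card = m),
        ψ (pat n P I)) ^ r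
      = ∑ b ∈ Finset.Icc m (r * m), (n.choose b : ℝ) * ((n.factorial : ℝ) * Ω b) := by
    calc ∑ P : Perm (Fin n),
        (∑ I ∈ Finset.univ.filter (fun I : Finset (Fin n) => I.card = m),
          ψ (pat n P I)) ^ r
        = ∑ P : Perm (Fin n), ∑ T ∈ (Fintype.piFinset fun _ : Fin r =>
              Finset.univ.filter fun I : Finset (Fin n) => I.card = m),
            ∏ a, ψ (pat n P (T a)) := by
          refine Finset.sum_congr rfl fun P _ => ?_
          rw [show (∑ I ∈ Finset.univ.filter (fun I : Finset (Fin n) => I.card = m),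
              ψ (pat n P I)) ^ r
            = ∏ _a : Fin r, ∑ I ∈ Finset.univ.filter
                (fun I : Finset (Fin n) => I.card = m), ψ (pat n P I) by
              simp [Finset.prod_const]]
          exact Finset.prod_univ_sum _ _
      _ = ∑ T ∈ (Fintype.piFinset fun _ : Fin r =>
              Finset.univ.filter fun I : Finset (Fin n) => I.card = m),
            ∑ P : Perm (Fin n), ∏ a, ψ (pat n P (T a)) := Finset.sum_comm
      _ = ∑ J : Finset (Fin n), ∑ T ∈ (Fintype.piFinset fun _ : Fin r =>
              Finset.univ.filter fun I : Finset (Fin n) => I.card = m).filter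
            (fun T => Finset.univ.biUnion T = J),
            ∑ P : Perm (Fin n), ∏ a, ψ (pat n P (T a)) :=
          (Finset.sum_fiberwise _ (fun T => Finset.univ.biUnion T) _).symm
      _ = ∑ J : Finset (Fin n), (n.factorial : ℝ) * Ω J.card := by
          refine Finset.sum_congr rfl fun J _ => ?_
          rw [perJ ψ pat hpat J, hΩ J.card]
      _ = ∑ J ∈ (Finset.univ : Finset (Fin n)).powerset,
            (n.factorial : ℝ) * Ω J.card := by rw [Finset.powerset_univ]
      _ = ∑ j ∈ Finset.range (n + 1), ∑ J ∈ Finset.powersetCard j Finset.univ,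
            (n.factorial : ℝ) * Ω J.card := by
          rw [Finset.sum_powerset]
          simp only [card_univ, Fintype.card_fin]
          rfl
      _ = ∑ j ∈ Finset.range (n + 1), (n.choose j : ℝ) * ((n.factorial : ℝ) * Ω j) := by
          refine Finset.sum_congr rfl fun j _ => ?_
          calc ∑ J ∈ Finset.powersetCard j Finset.univ, (n.factorial : ℝ) * Ω J.card
              = ∑ _J ∈ Finset.powersetCard j (Finset.univ : Finset (Fin n)),
                  (n.factorial : ℝ) * Ω j :=
                Finset.sum_congr rfl (fun J hJ => by
                  rw [(Finset.mem_powersetCard.mp hJ).2])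
            _ = ((Finset.powersetCard j (Finset.univ : Finset (Fin n))).card : ℝ)
                  * ((n.factorial : ℝ) * Ω j) := by
                rw [Finset.sum_const, nsmul_eq_mul]
            _ = (n.choose j : ℝ) * ((n.factorial : ℝ) * Ω j) := by
                rw [Finset.card_powersetCard, card_univ, Fintype.card_fin]
      _ = ∑ b ∈ Finset.Icc m (r * m), (n.choose b : ℝ) * ((n.factorial : ℝ) * Ω b) := by
          have h1 : ∑ j ∈ Finset.range (n + 1),
                (n.choose j : ℝ) * ((n.factorial : ℝ) * Ω j)
              = ∑ j ∈ Finset.range (n + 1) ∪ Finset.Icc m (r * m),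
                (n.choose j : ℝ) * ((n.factorial : ℝ) * Ω j) := by
            refine Finset.sum_subset Finset.subset_union_left fun x _ hx => ?_
            rw [Nat.choose_eq_zero_of_lt (by simpa using hx)]
            simp
          have h2 : ∑ j ∈ Finset.Icc m (r * m),
                (n.choose j : ℝ) * ((n.factorial : ℝ) * Ω j)
              = ∑ j ∈ Finset.range (n + 1) ∪ Finset.Icc m (r * m),
                (n.choose j : ℝ) * ((n.factorial : ℝ) * Ω j) := by
            refine Finset.sum_subset Finset.subset_union_right fun x _ hx => ?_
            rw [hΩ0 x hx]
            simp
          rw [h1, ← h2]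
  rw [key, Finset.mul_sum]
  refine Finset.sum_congr rfl fun b _ => ?_
  have hf : (n.factorial : ℝ) ≠ 0 := Nat.cast_ne_zero.mpr (Nat.factorial_ne_zero _)
  field_simp
end
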